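/- The tensor B vanishes identically if and only if N vanishes identically; i.e. B(X,Y) = 0 for all X,Y ∈ V exactly when N(X,Y) = 0 for all X,Y ∈ V. (In other words, B contains the same information as the Nijenhuis-type tensor N.) -/
import Mathlib


open RealInnerProductSpace

/- Setup: (V, ⟨·,·⟩) a finite-dimensional real inner product space, J a linear
isometry with J² = −id, and N a bilinear antisymmetric map with
J(N(X,Y)) = −N(JX,Y) = −N(X,JY) — the algebraic properties of the Nijenhuis
tensor of a strictly pseudoconvex, partially integrable CR manifold, with the
inner product playing the role of the Levi form L_θ. -/

/-- The tensor B vanishes identically if and only if N vanishes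
identically; B contains the same information as the Nijenhuis-type tensor N. -/
theorem stmt11 (V : Type) [NormedAddCommGroup V] [InnerProductSpace ℝ V]
    [FiniteDimensional ℝ V]
    (J : V →ₗ[ℝ] V)
    (hJiso : ∀ x y : V, ⟪J x, J y⟫ = ⟪x, y⟫)
    (hJJ : ∀ x : V, J (J x) = -x)
    (N : V →ₗ[ℝ] V →ₗ[ℝ] V)
    (hNanti : ∀ X Y : V, N X Y = -N Y X)
    (hNJ1 : ∀ X Y : V, J (N X Y) = -N (J X) Y)
    (hNJ2 : ∀ X Y : V, J (N X Y) = -N X (J Y))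
    (Bθ : V → V → V → ℝ)
    (hBθ : ∀ X Y Z : V,
      Bθ X Y Z = (1 / 8) * (⟪N X Y, Z⟫ + ⟪N Z Y, X⟫ + ⟪N Z X, Y⟫))
    (B : V → V → V)
    (hB : ∀ X Y Z : V, ⟪B X Y, Z⟫ = Bθ X Y Z)
    : (∀ X Y : V, B X Y = 0) ↔ (∀ X Y : V, N X Y = 0) := by
  constructor
  · intro h X Y
    have he : ∀ X Y Z : V, ⟪N X Y, Z⟫ + ⟪N Z Y, X⟫ + ⟪N Z X, Y⟫ = 0 := by
      intro X Y Z
      have h1 := hB X Y Z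
      rw [h X Y, hBθ] at h1
      have h2 : (0 : ℝ) = ⟪(0 : V), Z⟫ := by simp
      have h3 := h2.trans h1
      linarith [h3]
    have key : ∀ Z : V, ⟪N X Y, Z⟫ = 0 := by
      intro Z
      have e1 := he X Y Z
      have e2 := he Y Z X
      have a1 : ⟪N Z Y, X⟫ = -⟪N Y Z, X⟫ := by
        rw [hNanti Z Y, inner_neg_left]
      have a2 : ⟪N Z X, Y⟫ = -⟪N X Z, Y⟫ := by
        rw [hNanti Z X, inner_neg_left]
      linarith [e1, e2, a1, a2]
    have := key (N X Y)
    exact inner_self_eq_zero.mp this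
  · intro h X Y
    have : ∀ Z : V, ⟪B X Y, Z⟫ = ⟪(0 : V), Z⟫ := by
      intro Z
      rw [hB, hBθ, h X Y, h Z Y, h Z X]
      simp
    exact ext_inner_right ℝ this
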